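/- arXiv:1411.7890 — 3 statements merged into one kernel-verified Lean document; each statement's English description precedes it below -/
import Mathlib

section
/- Let u = x_1^{a_1}⋯x_n^{a_n} ∈ Mon(S∖I). Then for every minimal monomial generator v = x_1^{c_1}⋯x_n^{c_n} of I there exists an index i with c_i > a_i, so that the variable x_{i,a_i+1} divides the polarization v^℘. Consequently I^℘ ⊆ (x_{1,a_1+1}, …, x_{n,a_n+1}), and the prime ideal (x_{1,a_1+1}, …, x_{n,a_n+1}) is a minimal prime ideal of I^℘. -/
open MvPolynomial

noncomputable section

/-- The vertex set / variable set `𝒮` of the polarized ring `S^℘`: pairs `⟨i, j⟩` with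
`1 ≤ i ≤ n`, `1 ≤ j ≤ b i`.  Here `j : Fin (b i)` encodes the paper's second index `j + 1`,
so the vertex `⟨i, j⟩` stands for the variable `x_{i, j+1}` of the paper. -/
abbrev PolVars (m : ℕ) (b : Fin m → ℕ) := Σ i : Fin m, Fin (b i)

/-- `I` is a monomial ideal, i.e. generated by monomials. -/
def IsMonomialIdeal {K : Type} [Field K] {m : ℕ} (I : Ideal (MvPolynomial (Fin m) K)) : Prop :=
  ∃ A : Set (Fin m →₀ ℕ), I = Ideal.span ((fun c => (monomial c (1 : K))) '' A)

/-- The exponent vectors of the minimal monomial generators of a monomial ideal: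
the exponent vectors of monomials of `I` that are minimal under divisibility. -/
def MinGens (K : Type) [Field K] {m : ℕ} (I : Ideal (MvPolynomial (Fin m) K)) :
    Set (Fin m →₀ ℕ) :=
  {c | (monomial c (1 : K)) ∈ I ∧ ∀ c' : Fin m →₀ ℕ, c' ≤ c → c' ≠ c →
      (monomial c' (1 : K)) ∉ I}

/-- The polarization `v^℘ = ∏_{i=1}^n ∏_{j=1}^{c_i} x_{i,j}` of the monomial `v = x^c`. -/
def polMon (K : Type) [Field K] {m : ℕ} (b : Fin m → ℕ) (c : Fin m →₀ ℕ) :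
    MvPolynomial (PolVars m b) K :=
  ∏ v ∈ Finset.univ.filter (fun v : PolVars m b => (v.2 : ℕ) < c v.1), X v

/-- The polarization `I^℘ ⊆ S^℘` of the monomial ideal `I`, generated by the
polarizations of the minimal monomial generators of `I`. -/
def polarIdeal (K : Type) [Field K] {m : ℕ} (b : Fin m → ℕ)
    (I : Ideal (MvPolynomial (Fin m) K)) : Ideal (MvPolynomial (PolVars m b) K) :=
  Ideal.span (polMon K b '' MinGens K I)

/-- The squarefree monomial `x_{1,a_1+1} ⋯ x_{n,a_n+1} ∈ S^℘` associated with the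
exponent vector `a` of a monomial `x^a ∈ Mon(S∖I)`. -/
def genL (K : Type) [Field K] {m : ℕ} (b : Fin m → ℕ) (a : Fin m →₀ ℕ) :
    MvPolynomial (PolVars m b) K :=
  ∏ v ∈ Finset.univ.filter (fun v : PolVars m b => (v.2 : ℕ) = a v.1), X v

/-- The ideal `L(I) ⊆ S^℘`, generated by the monomials `x_{1,a_1+1} ⋯ x_{n,a_n+1}`
with `x^a ∈ Mon(S∖I)`. -/
def LIdeal (K : Type) [Field K] {m : ℕ} (b : Fin m → ℕ)
    (I : Ideal (MvPolynomial (Fin m) K)) : Ideal (MvPolynomial (PolVars m b) K) :=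
  Ideal.span (genL K b '' {a | (monomial a (1 : K)) ∉ I})

/-- The monomial prime ideal `φ(x^a) = (x_{1,a_1+1}, …, x_{n,a_n+1}) ⊆ S^℘`. -/
def phiIdeal (K : Type) [Field K] {m : ℕ} (b : Fin m → ℕ) (a : Fin m →₀ ℕ) :
    Ideal (MvPolynomial (PolVars m b) K) :=
  Ideal.span ((fun v => (X v : MvPolynomial (PolVars m b) K)) ''
    {v : PolVars m b | (v.2 : ℕ) = a v.1})

/-- The set of faces of the simplicial complex `Δ(I)` on the vertex set `𝒮`, whose
Stanley–Reisner ideal is `I^℘`: a finite set `F` of vertices is a face iff the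
squarefree monomial `∏_{v ∈ F} v` does not belong to `I^℘`. -/
def facesDelta (K : Type) [Field K] {m : ℕ} (b : Fin m → ℕ)
    (I : Ideal (MvPolynomial (Fin m) K)) : Set (Finset (PolVars m b)) :=
  {F | (∏ v ∈ F, (X v : MvPolynomial (PolVars m b) K)) ∉ polarIdeal K b I}

/-- `F` is a facet (maximal face) of the simplicial complex (set of faces) `Δ`. -/
def IsFacetOf {V : Type} (Δ : Set (Finset V)) (F : Finset V) : Prop :=
  F ∈ Δ ∧ ∀ G ∈ Δ, F ⊆ G → F = G

/-- Zero-dimensionality data for a monomial ideal: `I` is a proper monomial ideal and,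
for each `i`, `b i ≥ 1` is the smallest positive integer with `x_i^{b i} ∈ I`
(equivalently, `dim S/I = 0` with the `b i` minimal). -/
def ZeroDimData (K : Type) [Field K] {m : ℕ} (b : Fin m → ℕ)
    (I : Ideal (MvPolynomial (Fin m) K)) : Prop :=
  IsMonomialIdeal I ∧ I ≠ ⊤ ∧ ∀ i : Fin m, 1 ≤ b i ∧
    (monomial (Finsupp.single i (b i)) (1 : K)) ∈ I ∧
    ∀ j : ℕ, j < b i → (monomial (Finsupp.single i j) (1 : K)) ∉ I

/-- The deletion `del_Δ(v) = {G ∈ Δ : v ∉ G}`. -/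
def delC {V : Type} (Δ : Set (Finset V)) (v : V) : Set (Finset V) :=
  {G ∈ Δ | v ∉ G}

/-- The link `link_Δ(v) = {G ∈ Δ : v ∉ G and G ∪ {v} ∈ Δ}`. -/
def linkC {V : Type} [DecidableEq V] (Δ : Set (Finset V)) (v : V) : Set (Finset V) :=
  {G ∈ Δ | v ∉ G ∧ insert v G ∈ Δ}

/-- Vertex decomposability of a simplicial complex (given as its set of faces):
`Δ` is vertex decomposable if it is a simplex, or it contains a vertex `v` such that
(i) every facet of `del_Δ(v)` is a facet of `Δ` (`v` is a shedding vertex), and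
(ii) both `del_Δ(v)` and `link_Δ(v)` are vertex decomposable. -/
inductive IsVertexDecomposable {V : Type} [DecidableEq V] : Set (Finset V) → Prop
  | simplex (F : Finset V) : IsVertexDecomposable {G | G ⊆ F}
  | shed (Δ : Set (Finset V)) (v : V) (hv : {v} ∈ Δ)
      (hshed : ∀ F : Finset V, IsFacetOf (delC Δ v) F → IsFacetOf Δ F)
      (hdel : IsVertexDecomposable (delC Δ v))
      (hlink : IsVertexDecomposable (linkC Δ v)) : IsVertexDecomposable Δ

/-- The vertex map replacing `x_{i₀,j}` by `x_{i₀,j-1}` and fixing all other vertices. -/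
def shiftDown {m : ℕ} {b : Fin m → ℕ} (i₀ : Fin m) (v : PolVars m b) : PolVars m b :=
  ⟨v.1, ⟨(v.2 : ℕ) - (if v.1 = i₀ then 1 else 0),
    Nat.lt_of_le_of_lt (Nat.sub_le _ _) v.2.isLt⟩⟩

/-- `set(u)` for a generator `u = genL a` of `L(I)` with respect to the order `r`:
the set of variables `x` of `S^℘` such that `x·u` lies in the ideal generated by the
generators of `L(I)` preceding `u`. -/
def setOfGen (K : Type) [Field K] {m : ℕ} (b : Fin m → ℕ)
    (I : Ideal (MvPolynomial (Fin m) K))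
    (r : (Fin m →₀ ℕ) → (Fin m →₀ ℕ) → Prop) (a : Fin m →₀ ℕ) : Set (PolVars m b) :=
  {v | ∃ a' : Fin m →₀ ℕ, (monomial a' (1 : K)) ∉ I ∧ r a' a ∧ a' ≠ a ∧
      genL K b a' ∣ X v * genL K b a}

/-- `J(u,i)`: the weakly increasing sequence of the second indices of the variables
`x_{i,·}` dividing the monomial with exponent vector `e` (counted with multiplicity). -/
def rowList {m : ℕ} {b : Fin m → ℕ} (e : PolVars m b →₀ ℕ) (i : Fin m) : List ℕ :=
  Multiset.sort (∑ j : Fin (b i), Multiset.replicate (e ⟨i, j⟩) (j : ℕ)) (· ≤ ·)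

/-- Lexicographic (weak) order on sequences of natural numbers. -/
def lexLE (l l' : List ℕ) : Prop := l = l' ∨ List.Lex (· < ·) l l'

/-- The exponent vectors of the (minimal) monomial generators of `L(I)^k`:
products of `k` generators of `L(I)`. -/
def GLkE (K : Type) [Field K] {m : ℕ} (b : Fin m → ℕ)
    (I : Ideal (MvPolynomial (Fin m) K)) (k : ℕ) : Set (PolVars m b →₀ ℕ) :=
  {e | ∃ f : Fin k → (Fin m →₀ ℕ), (∀ j, (monomial (f j) (1 : K)) ∉ I) ∧
      (monomial e (1 : K) : MvPolynomial (PolVars m b) K) = ∏ j, genL K b (f j)}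

/-- The depth of a module `M` with respect to the ideal `J`: the maximal length of an
`M`-regular sequence consisting of elements of `J`. -/
def myDepth (R : Type) [CommRing R] (J : Ideal R) (M : Type) [AddCommGroup M]
    [Module R M] : ℕ :=
  sSup {k : ℕ | ∃ rs : List R, rs.length = k ∧ (∀ r ∈ rs, r ∈ J) ∧
      RingTheory.Sequence.IsRegular M rs}

/-- `max{deg lcm(u_1, …, u_k) : u_1, …, u_k ∈ Mon(S∖I)}`; the degree of the lcm of the
monomials `x^{f 1}, …, x^{f k}` is `∑_i max_j (f j) i`. -/
def maxLcmDeg (K : Type) [Field K] {m : ℕ} (I : Ideal (MvPolynomial (Fin m) K))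
    (k : ℕ) : ℕ :=
  sSup {d : ℕ | ∃ f : Fin k → (Fin m →₀ ℕ), (∀ j, (monomial (f j) (1 : K)) ∉ I) ∧
      d = ∑ i : Fin m, Finset.univ.sup (fun j => (f j) i)}


/-- Span of a set of variables is a prime ideal (kernel of the "kill variables" map). -/
lemma prime_span_X {σ : Type} (K : Type) [Field K] (s : Set σ) :
    (Ideal.span (MvPolynomial.X '' s : Set (MvPolynomial σ K))).IsPrime := by
  classical
  set g : σ → MvPolynomial σ K := fun v => if v ∈ s then 0 else X v with hg
  have key : ∀ (c' : σ →₀ ℕ) (r : K), aeval g (monomial c' r) =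
      if ∀ i ∈ s, c' i = 0 then monomial c' r else 0 := by
    intro c' r
    rw [aeval_monomial]
    split_ifs with h
    · have : (c'.prod fun i k => g i ^ k) = c'.prod fun i k => (X i : MvPolynomial σ K) ^ k := by
        apply Finsupp.prod_congr
        intro i hi
        have : i ∉ s := fun hs => (Finsupp.mem_support_iff.mp hi) (h i hs)
        simp [hg, this]
      rw [this, monomial_eq, algebraMap_eq]
    · push_neg at h
      obtain ⟨i, his, hi⟩ := h
      have hmem : i ∈ c'.support := Finsupp.mem_support_iff.mpr hi
      have : (c'.prod fun i k => g i ^ k) = 0 := by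
        apply Finset.prod_eq_zero hmem
        simp [hg, his, zero_pow hi]
      rw [this, mul_zero]
  have hker : Ideal.span (MvPolynomial.X '' s : Set (MvPolynomial σ K)) =
      RingHom.ker (aeval g : MvPolynomial σ K →ₐ[K] MvPolynomial σ K) := by
    apply le_antisymm
    · rw [Ideal.span_le]
      rintro _ ⟨v, hv, rfl⟩
      simp [RingHom.mem_ker, hg, hv]
    · intro f hf
      rw [mem_ideal_span_X_image]
      by_contra hcon
      push_neg at hcon
      obtain ⟨c, hc, hcs⟩ := hcon
      have hf0 : aeval g f = 0 := hf
      have hexp : aeval g f = ∑ c' ∈ f.support,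
          if ∀ i ∈ s, c' i = 0 then monomial c' (coeff c' f) else 0 := by
        conv_lhs => rw [as_sum f]
        rw [map_sum]
        exact Finset.sum_congr rfl fun c' _ => key c' _
      have hco : coeff c (aeval g f) = coeff c f := by
        rw [hexp, coeff_sum]
        rw [Finset.sum_eq_single_of_mem c hc]
        · rw [if_pos hcs, coeff_monomial, if_pos rfl]
        · intro c' _ hne
          split_ifs with h
          · rw [coeff_monomial, if_neg hne]
          · exact coeff_zero _
      rw [hf0, coeff_zero] at hco
      exact (mem_support_iff.mp hc) hco.symm
  rw [hker]
  exact RingHom.ker_isPrime _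

lemma X_mem_span_X_iff {σ : Type} {K : Type} [Field K] {s : Set σ} {v : σ} :
    (X v : MvPolynomial σ K) ∈ Ideal.span (MvPolynomial.X '' s : Set (MvPolynomial σ K)) ↔
      v ∈ s := by
  constructor
  · intro h
    rw [mem_ideal_span_X_image] at h
    obtain ⟨i, his, hi⟩ := h (Finsupp.single v 1) (by simp [support_X])
    have hiv : i = v := by
      by_contra hne
      exact hi (Finsupp.single_eq_of_ne' fun h => hne h.symm)
    rwa [hiv] at his
  · intro h
    exact Ideal.subset_span ⟨v, h, rfl⟩

/-- Monomial ideals are up-closed for divisibility of exponents (true for any ideal). -/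
lemma mono_mem {K : Type} [Field K] {m : ℕ} {I : Ideal (MvPolynomial (Fin m) K)}
    {c d : Fin m →₀ ℕ} (hcd : c ≤ d) (hc : (monomial c (1 : K)) ∈ I) :
    (monomial d (1 : K)) ∈ I := by
  have : (monomial d (1 : K)) = monomial (d - c) 1 * monomial c 1 := by
    rw [monomial_mul, one_mul, tsub_add_cancel_of_le hcd]
  rw [this]
  exact Ideal.mul_mem_left _ _ hc

/-- Every monomial in `I` is divisible by a minimal generator. -/
lemma exists_minGen {K : Type} [Field K] {m : ℕ} {I : Ideal (MvPolynomial (Fin m) K)}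
    {d : Fin m →₀ ℕ} (hd : (monomial d (1 : K)) ∈ I) :
    ∃ c ∈ MinGens K I, c ≤ d := by
  have hwf : WellFoundedLT (Fin m →₀ ℕ) := inferInstance
  obtain ⟨c, ⟨hcd, hcI⟩, hmin⟩ := hwf.wf.has_min
    {c : Fin m →₀ ℕ | c ≤ d ∧ (monomial c (1 : K)) ∈ I} ⟨d, le_refl d, hd⟩
  refine ⟨c, ⟨hcI, fun c' hle hne hmem => ?_⟩, hcd⟩
  exact hmin c' ⟨hle.trans hcd, hmem⟩ (lt_of_le_of_ne hle hne)

/-- Let `u = x^a ∈ Mon(S∖I)`. Then for every minimal monomial generator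
`v = x^c` of `I` there is an index `i` with `c_i > a_i`, so that the variable `x_{i,a_i+1}`
divides the polarization `v^℘`.  Consequently `I^℘ ⊆ (x_{1,a_1+1}, …, x_{n,a_n+1})`, and
`(x_{1,a_1+1}, …, x_{n,a_n+1})` is a minimal prime ideal of `I^℘`. -/
theorem statement1 {K : Type} [Field K] {n : ℕ} (b : Fin n → ℕ)
    (I : Ideal (MvPolynomial (Fin n) K)) (hI : ZeroDimData K b I)
    (a : Fin n →₀ ℕ) (ha : (monomial a (1 : K)) ∉ I) :
    (∀ c ∈ MinGens K I, ∃ i : Fin n, a i < c i ∧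
      ∃ v : PolVars n b, v.1 = i ∧ (v.2 : ℕ) = a i ∧ X v ∣ polMon K b c) ∧
    polarIdeal K b I ≤ phiIdeal K b a ∧
    phiIdeal K b a ∈ (polarIdeal K b I).minimalPrimes := by
  classical
  obtain ⟨-, hItop, hb⟩ := hI
  have haib : ∀ i : Fin n, a i < b i := by
    intro i
    by_contra h
    push_neg at h
    exact ha (mono_mem (Finsupp.single_le_iff.mpr h) (hb i).2.1)
  have part1 : ∀ c ∈ MinGens K I, ∃ i : Fin n, a i < c i ∧
      ∃ v : PolVars n b, v.1 = i ∧ (v.2 : ℕ) = a i ∧ X v ∣ polMon K b c := by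
    intro c hc
    have hex : ∃ i, a i < c i := by
      by_contra h
      push_neg at h
      exact ha (mono_mem (Finsupp.le_def.mpr h) hc.1)
    obtain ⟨i, hi⟩ := hex
    refine ⟨i, hi, ⟨i, ⟨a i, haib i⟩⟩, rfl, rfl, ?_⟩
    exact Finset.dvd_prod_of_mem _ (Finset.mem_filter.mpr ⟨Finset.mem_univ _, hi⟩)
  have part2 : polarIdeal K b I ≤ phiIdeal K b a := by
    rw [polarIdeal, Ideal.span_le]
    rintro _ ⟨c, hc, rfl⟩
    obtain ⟨i, hi, v, hv1, hv2, w, hw⟩ := part1 c hc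
    rw [hw]
    refine Ideal.mul_mem_right _ _ (Ideal.subset_span ⟨v, ?_, rfl⟩)
    show (v.2 : ℕ) = a v.1
    rw [← hv1] at hv2; exact hv2
  have key : ∀ (q : Ideal (MvPolynomial (PolVars n b) K)), q.IsPrime → polarIdeal K b I ≤ q →
      q ≤ phiIdeal K b a → ∀ v : PolVars n b, (v.2 : ℕ) = a v.1 → X v ∈ q := by
    rintro q hq hIq hqphi ⟨v1, v2⟩ hv
    have hc' : (monomial (a + Finsupp.single v1 (b v1)) (1 : K)) ∈ I :=
      mono_mem le_add_self (hb v1).2.1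
    obtain ⟨c, hcmin, hcle⟩ := exists_minGen hc'
    have hcq : polMon K b c ∈ q := hIq (Ideal.subset_span ⟨c, hcmin, rfl⟩)
    rw [polMon, Ideal.IsPrime.prod_mem_iff] at hcq
    obtain ⟨w, hwmem, hwq⟩ := hcq
    rw [Finset.mem_filter] at hwmem
    obtain ⟨w1, w2⟩ := w
    have hwc : (w2 : ℕ) < c w1 := hwmem.2
    have hwphi : X (⟨w1, w2⟩ : PolVars n b) ∈ phiIdeal K b a := hqphi hwq
    have hwa' : (⟨w1, w2⟩ : PolVars n b) ∈ {v : PolVars n b | (v.2 : ℕ) = a v.1} :=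
      X_mem_span_X_iff.mp hwphi
    have hwa : (w2 : ℕ) = a w1 := hwa'
    have h1 : a w1 < a w1 + Finsupp.single v1 (b v1) w1 := by
      calc a w1 = (w2 : ℕ) := hwa.symm
        _ < c w1 := hwc
        _ ≤ a w1 + Finsupp.single v1 (b v1) w1 := by
            have := Finsupp.le_def.mp hcle w1
            rwa [Finsupp.add_apply] at this
    have hw1 : w1 = v1 := by
      by_contra hne
      rw [Finsupp.single_eq_of_ne' fun h => hne h.symm] at h1
      simp at h1
    subst hw1
    have hw2 : w2 = v2 := Fin.ext (hwa.trans hv.symm)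
    subst hw2
    exact hwq
  have hprime : (phiIdeal K b a).IsPrime := prime_span_X K _
  refine ⟨part1, part2, ⟨hprime, part2⟩, ?_⟩
  rintro q ⟨hq, hIq⟩ hqle
  rw [phiIdeal, Ideal.span_le]
  rintro _ ⟨v, hv, rfl⟩
  exact key q hq hIq hqle v hv

end
end

section
/- The simplicial complex Δ(I) is pure and shellable: its facets can be ordered F_1, F_2, …, F_m in such a way that for every 2 ≤ j ≤ m, the intersection of the simplex ⟨F_j⟩ with the subcomplex ⟨F_1, …, F_{j−1}⟩ generated by the previous facets is nonempty and pure of dimension |F_j| − 2 (i.e., it is generated by a nonempty collection of maximal proper faces of F_j). -/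
open MvPolynomial

noncomputable section

section St8
variable {K : Type} [Field K]

def eD {V : Type} (D : Finset V) : V →₀ ℕ := ∑ v ∈ D, Finsupp.single v 1

lemma eD_apply {V : Type} [DecidableEq V] (D : Finset V) (w : V) :
    eD D w = if w ∈ D then 1 else 0 := by
  classical
  simp [eD, Finsupp.finset_sum_apply, Finsupp.single_apply, Finset.sum_ite_eq]

lemma eD_le_iff {V : Type} (D F : Finset V) : eD D ≤ eD F ↔ D ⊆ F := by
  classical
  constructor
  · intro h v hv
    have := h v
    rw [eD_apply, eD_apply, if_pos hv] at this
    by_contra hvF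
    rw [if_neg hvF] at this; omega
  · intro h v
    rw [eD_apply, eD_apply]
    by_cases hv : v ∈ D
    · rw [if_pos hv, if_pos (h hv)]
    · simp [hv]

lemma prod_X_eq {V : Type} (D : Finset V) :
    (∏ v ∈ D, (X v : MvPolynomial V K)) = monomial (eD D) 1 := by
  classical
  induction D using Finset.induction with
  | empty => simp [eD]
  | @insert a s ha ih =>
      have h : eD (insert a s) = Finsupp.single a 1 + eD s := Finset.sum_insert ha
      rw [Finset.prod_insert ha, ih, h, monomial_single_add, pow_one]
end St8

section St8b
variable {K : Type} [Field K] {n : ℕ} {b : Fin n → ℕ} {I : Ideal (MvPolynomial (Fin n) K)}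

lemma deg_lt {c' c : Fin n →₀ ℕ} (hle : c' ≤ c) (hne : c' ≠ c) :
    ∑ i, c' i < ∑ i, c i := by
  refine Finset.sum_lt_sum (fun i _ => hle i) ?_
  by_contra h
  push_neg at h
  exact hne (Finsupp.ext fun i => le_antisymm (hle i) (h i (Finset.mem_univ i)))

lemma exists_minGen_s8 (c : Fin n →₀ ℕ) (h : monomial c (1:K) ∈ I) :
    ∃ a ∈ MinGens K I, a ≤ c := by
  generalize hd : ∑ i, c i = d
  induction d using Nat.strong_induction_on generalizing c with
  | _ d ih =>
    by_cases hc : ∀ c' : Fin n →₀ ℕ, c' ≤ c → c' ≠ c → (monomial c' (1:K)) ∉ I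
    · exact ⟨c, ⟨h, hc⟩, le_refl c⟩
    · push_neg at hc
      obtain ⟨c', hle, hne, hmem⟩ := hc
      obtain ⟨a, ha, hac⟩ := ih (∑ i, c' i) (hd ▸ deg_lt hle hne) c' hmem rfl
      exact ⟨a, ha, le_trans hac hle⟩

lemma monomial_mem_iff (c : Fin n →₀ ℕ) :
    monomial c (1:K) ∈ I ↔ ∃ a ∈ MinGens K I, a ≤ c := by
  constructor
  · exact exists_minGen_s8 c
  · rintro ⟨a, ha, hle⟩
    have h : monomial c (1:K) = monomial (c - a) 1 * monomial a 1 := by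
      rw [monomial_mul, one_mul, tsub_add_cancel_of_le hle]
    rw [h]
    exact Ideal.mul_mem_left _ _ ha.1

lemma not_mem_of_le {a' a : Fin n →₀ ℕ} (hle : a' ≤ a)
    (h : monomial a (1:K) ∉ I) : monomial a' (1:K) ∉ I := fun hmem =>
  h ((monomial_mem_iff a).2
    (let ⟨g, hg, hga⟩ := exists_minGen_s8 a' hmem; ⟨g, hg, le_trans hga hle⟩))

/-- The support of the polarization of `x^c`. -/
def rowSet (b : Fin n → ℕ) (c : Fin n →₀ ℕ) : Finset (PolVars n b) :=
  Finset.univ.filter (fun v : PolVars n b => (v.2 : ℕ) < c v.1)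

lemma mem_polarIdeal_iff (F : Finset (PolVars n b)) :
    (∏ v ∈ F, (X v : MvPolynomial (PolVars n b) K)) ∈ polarIdeal K b I ↔
      ∃ c ∈ MinGens K I, rowSet b c ⊆ F := by
  have hgen : polMon K b '' MinGens K I =
      (fun s => monomial s (1:K)) '' ((fun c => eD (rowSet b c)) '' MinGens K I) := by
    rw [Set.image_image]
    apply Set.image_congr
    intro c _
    exact prod_X_eq _
  classical
  rw [polarIdeal, hgen, prod_X_eq, mem_ideal_span_monomial_image]
  rw [support_monomial, if_neg (one_ne_zero : (1:K) ≠ 0)]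
  simp only [Finset.mem_singleton, forall_eq, Set.mem_image, exists_exists_and_eq_and]
  exact exists_congr fun c => and_congr_right fun _ => eD_le_iff _ _

lemma mem_faces_iff (F : Finset (PolVars n b)) :
    F ∈ facesDelta K b I ↔ ∀ c ∈ MinGens K I, ¬ rowSet b c ⊆ F := by
  rw [facesDelta, Set.mem_setOf_eq, mem_polarIdeal_iff]
  push_neg
  rfl

end St8b

section St8c
variable {K : Type} [Field K] {n : ℕ} {b : Fin n → ℕ} {I : Ideal (MvPolynomial (Fin n) K)}

/-- exponent vector of a tuple `s : Π i, Fin (b i)`. -/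
def toF (s : ∀ i, Fin (b i)) : Fin n →₀ ℕ :=
  Finsupp.equivFunOnFinite.symm fun i => (s i : ℕ)

@[simp] lemma toF_apply (s : ∀ i, Fin (b i)) (i : Fin n) : toF s i = (s i : ℕ) := rfl

/-- the candidate facet associated with `s`. -/
def facetF (b : Fin n → ℕ) (s : ∀ i, Fin (b i)) : Finset (PolVars n b) :=
  Finset.univ.filter (fun v : PolVars n b => (v.2 : ℕ) ≠ (s v.1 : ℕ))

lemma mem_facetF {s : ∀ i, Fin (b i)} {v : PolVars n b} :
    v ∈ facetF b s ↔ (v.2 : ℕ) ≠ (s v.1 : ℕ) := by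
  simp [facetF]

lemma single_mem_minGens (hI : ZeroDimData K b I) (i : Fin n) :
    Finsupp.single i (b i) ∈ MinGens K I := by
  obtain ⟨-, -, h⟩ := hI
  refine ⟨(h i).2.1, fun c' hle hne hmem => ?_⟩
  have hc' : c' = Finsupp.single i (c' i) := by
    ext k
    by_cases hk : k = i
    · subst hk; simp
    · have h1 : c' k ≤ (Finsupp.single i (b i)) k := hle k
      rw [Finsupp.single_apply, if_neg (fun h : i = k => hk h.symm)] at h1
      rw [Finsupp.single_apply, if_neg (fun h : i = k => hk h.symm)]
      omega
  have hlt : c' i < b i := by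
    have h1 : c' i ≤ b i := by simpa using hle i
    rcases lt_or_eq_of_le h1 with h2 | h2
    · exact h2
    · exact absurd (by rw [hc', h2]) hne
  exact (h i).2.2 (c' i) hlt (hc' ▸ hmem)

lemma rowSet_single (i : Fin n) (hb : 1 ≤ b i) :
    rowSet b (Finsupp.single i (b i)) = Finset.univ.filter (fun v : PolVars n b => v.1 = i) := by
  ext v
  simp only [rowSet, Finset.mem_filter, Finset.mem_univ, true_and, Finsupp.single_apply]
  constructor
  · intro h
    by_contra hne
    rw [if_neg (fun h' => hne h'.symm)] at h
    omega
  · intro h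
    rw [if_pos h.symm]
    exact (h ▸ v.2.isLt)

/-- a face cannot contain a whole row -/
lemma row_escape (hI : ZeroDimData K b I) {F : Finset (PolVars n b)}
    (hF : F ∈ facesDelta K b I) (i : Fin n) : ∃ j : Fin (b i), (⟨i, j⟩ : PolVars n b) ∉ F := by
  have h := (mem_faces_iff F).1 hF _ (single_mem_minGens hI i)
  rw [rowSet_single i (hI.2.2 i).1] at h
  rw [Finset.not_subset] at h
  obtain ⟨v, hv, hvF⟩ := h
  simp only [Finset.mem_filter, Finset.mem_univ, true_and] at hv
  obtain ⟨i', j⟩ := v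
  cases hv
  exact ⟨j, hvF⟩

lemma facetF_face {s : ∀ i, Fin (b i)} (hs : monomial (toF s) (1:K) ∉ I) :
    facetF b s ∈ facesDelta K b I := by
  rw [mem_faces_iff]
  intro c hc hsub
  apply hs
  rw [monomial_mem_iff]
  refine ⟨c, hc, fun i => ?_⟩
  by_contra hlt
  push_neg at hlt
  simp only [toF_apply] at hlt
  have hv : (⟨i, s i⟩ : PolVars n b) ∈ rowSet b c := by
    simp only [rowSet, Finset.mem_filter, Finset.mem_univ, true_and]
    exact hlt
  have := hsub hv
  rw [mem_facetF] at this
  exact this rfl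

/-- every face is contained in a `facetF s` with `x^s ∉ I` -/
lemma face_subset_facet (hI : ZeroDimData K b I) {F : Finset (PolVars n b)}
    (hF : F ∈ facesDelta K b I) :
    ∃ s : ∀ i, Fin (b i), monomial (toF s) (1:K) ∉ I ∧ F ⊆ facetF b s := by
  classical
  have hne : ∀ i : Fin n, (Finset.univ.filter
      (fun j : Fin (b i) => (⟨i, j⟩ : PolVars n b) ∉ F)).Nonempty := by
    intro i
    obtain ⟨j, hj⟩ := row_escape hI hF i
    exact ⟨j, by simp [hj]⟩
  set s : ∀ i, Fin (b i) := fun i => (Finset.univ.filter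
      (fun j : Fin (b i) => (⟨i, j⟩ : PolVars n b) ∉ F)).min' (hne i) with hs
  have hsF : ∀ i, (⟨i, s i⟩ : PolVars n b) ∉ F := by
    intro i
    have := Finset.min'_mem _ (hne i)
    simpa using this
  have hmin : ∀ i (j : Fin (b i)), (j : ℕ) < (s i : ℕ) → (⟨i, j⟩ : PolVars n b) ∈ F := by
    intro i j hj
    by_contra hjF
    have : s i ≤ j := Finset.min'_le _ _ (by simp [hjF])
    exact absurd hj (by omega)
  refine ⟨s, ?_, ?_⟩
  · intro hmem
    rw [monomial_mem_iff] at hmem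
    obtain ⟨c, hc, hle⟩ := hmem
    refine (mem_faces_iff F).1 hF c hc ?_
    intro v hv
    simp only [rowSet, Finset.mem_filter, Finset.mem_univ, true_and] at hv
    have : (v.2 : ℕ) < (s v.1 : ℕ) := lt_of_lt_of_le hv (by simpa using hle v.1)
    have := hmin v.1 v.2 this
    simpa using this
  · intro v hvF
    rw [mem_facetF]
    intro heq
    have : v = ⟨v.1, s v.1⟩ := by
      obtain ⟨i, j⟩ := v
      simp only at heq
      rw [Fin.ext heq]
    exact hsF v.1 (this ▸ hvF)

lemma facetF_isFacet (hI : ZeroDimData K b I) {s : ∀ i, Fin (b i)}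
    (hs : monomial (toF s) (1:K) ∉ I) : IsFacetOf (facesDelta K b I) (facetF b s) := by
  refine ⟨facetF_face hs, fun G hG hsub => ?_⟩
  refine Finset.Subset.antisymm hsub fun v hv => ?_
  rw [mem_facetF]
  intro heq
  -- v = ⟨v.1, s v.1⟩, and row v.1 ⊆ G, contradiction
  have hrow : rowSet b (Finsupp.single v.1 (b v.1)) ⊆ G := by
    rw [rowSet_single v.1 (hI.2.2 v.1).1]
    intro w hw
    simp only [Finset.mem_filter, Finset.mem_univ, true_and] at hw
    by_cases hws : (w.2 : ℕ) = (s w.1 : ℕ)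
    · have : w = v := by
        obtain ⟨i, j⟩ := w; obtain ⟨i', j'⟩ := v
        cases hw
        simp only at hws heq
        rw [Fin.ext (hws.trans heq.symm)]
      exact this ▸ hv
    · exact hsub (mem_facetF.2 hws)
  exact (mem_faces_iff G).1 hG _ (single_mem_minGens hI v.1) hrow

lemma facetF_injective : Function.Injective (facetF b) := by
  intro s t h
  funext i
  by_contra hne
  have h1 : (⟨i, s i⟩ : PolVars n b) ∈ facetF b t := mem_facetF.2 (by
    simp only
    exact fun he => hne (Fin.ext he))
  rw [← h, mem_facetF] at h1
  exact h1 rfl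

lemma facetF_card (s : ∀ i, Fin (b i)) :
    (facetF b s).card + n = Fintype.card (PolVars n b) := by
  classical
  have h := Finset.card_filter_add_card_filter_not (s := Finset.univ)
    (p := fun v : PolVars n b => (v.2 : ℕ) ≠ (s v.1 : ℕ))
  have h2 : (Finset.univ.filter (fun v : PolVars n b => ¬ (v.2 : ℕ) ≠ (s v.1 : ℕ))).card = n := by
    have himg : Finset.univ.filter (fun v : PolVars n b => ¬ (v.2 : ℕ) ≠ (s v.1 : ℕ)) =
        Finset.univ.image (fun i : Fin n => (⟨i, s i⟩ : PolVars n b)) := by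
      ext v
      simp only [Finset.mem_filter, Finset.mem_univ, true_and, not_not, Finset.mem_image]
      constructor
      · intro h'
        refine ⟨v.1, ?_⟩
        obtain ⟨i, j⟩ := v
        simp only at h' ⊢
        rw [Fin.ext h'.symm]
      · rintro ⟨i, rfl⟩
        rfl
    rw [himg, Finset.card_image_of_injective _ (fun i i' h' => congrArg Sigma.fst h'),
      Finset.card_univ, Fintype.card_fin]
  rw [Finset.card_univ] at h
  rw [facetF]
  omega

end St8c

section St8d
variable {n : ℕ} {b : Fin n → ℕ}

def degT (s : ∀ i, Fin (b i)) : ℕ := ∑ i, (s i : ℕ)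

def keyT (s : ∀ i, Fin (b i)) : ℕ :=
  (Fintype.card (∀ i, Fin (b i)) + 1) * degT s + ((Fintype.equivFin (∀ i, Fin (b i))) s : ℕ)

lemma keyT_lt {s t : ∀ i, Fin (b i)} (h : degT s < degT t) : keyT s < keyT t := by
  have h1 : ((Fintype.equivFin (∀ i, Fin (b i))) s : ℕ) < Fintype.card (∀ i, Fin (b i)) + 1 :=
    Nat.lt_succ_of_lt ((Fintype.equivFin (∀ i, Fin (b i))) s).isLt
  calc keyT s
      < (Fintype.card (∀ i, Fin (b i)) + 1) * degT s
          + (Fintype.card (∀ i, Fin (b i)) + 1) := by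
        rw [keyT]; omega
    _ = (Fintype.card (∀ i, Fin (b i)) + 1) * (degT s + 1) := by ring
    _ ≤ (Fintype.card (∀ i, Fin (b i)) + 1) * degT t := Nat.mul_le_mul_left _ h
    _ ≤ keyT t := Nat.le_add_right _ _

lemma degT_le_of_keyT_le {s t : ∀ i, Fin (b i)} (h : keyT s ≤ keyT t) : degT s ≤ degT t := by
  by_contra hlt
  push_neg at hlt
  exact absurd h (not_le_of_gt (keyT_lt hlt))

lemma keyT_inj {s t : ∀ i, Fin (b i)} (h : keyT s = keyT t) : s = t := by
  have hdeg : degT s = degT t :=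
    le_antisymm (degT_le_of_keyT_le h.le) (degT_le_of_keyT_le h.ge)
  have henc : ((Fintype.equivFin (∀ i, Fin (b i))) s : ℕ) =
      ((Fintype.equivFin (∀ i, Fin (b i))) t : ℕ) := by
    rw [keyT, keyT, hdeg] at h
    omega
  exact (Fintype.equivFin (∀ i, Fin (b i))).injective (Fin.ext henc)

lemma exists_coord_lt {s t : ∀ i, Fin (b i)} (hne : t ≠ s) (hdeg : degT t ≤ degT s) :
    ∃ i, (t i : ℕ) < (s i : ℕ) := by
  by_contra h
  push_neg at h
  have hne' : ∃ i, (s i : ℕ) < (t i : ℕ) := by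
    by_contra h2
    push_neg at h2
    exact hne (funext fun i => Fin.ext (le_antisymm (h2 i) (h i)))
  obtain ⟨i₀, hi₀⟩ := hne'
  exact absurd hdeg (not_le_of_gt (Finset.sum_lt_sum (fun i _ => h i) ⟨i₀, Finset.mem_univ i₀, hi₀⟩))

end St8d

/-- `Δ(I)` is pure and shellable: its facets can be ordered
`F_1, …, F_m` so that for every `j ≥ 2` the intersection of the simplex `⟨F_j⟩` with
`⟨F_1, …, F_{j−1}⟩` is nonempty and pure of dimension `|F_j| − 2`, i.e. it is generated by
a nonempty collection of maximal proper faces of `F_j`: there is at least one `H ⊆ F_j`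
with `|H| = |F_j| − 1` contained in an earlier facet, and every common face of `F_j` and
an earlier facet is contained in such an `H`. -/
theorem statement8 {K : Type} [Field K] {n : ℕ} (b : Fin n → ℕ)
    (I : Ideal (MvPolynomial (Fin n) K)) (hI : ZeroDimData K b I) :
    ∃ (m : ℕ) (F : Fin m → Finset (PolVars n b)),
      (∀ j, IsFacetOf (facesDelta K b I) (F j)) ∧
      Function.Injective F ∧
      (∀ G : Finset (PolVars n b), IsFacetOf (facesDelta K b I) G → ∃ j, F j = G) ∧
      (∀ j j' : Fin m, (F j).card = (F j').card) ∧
      (∀ j : Fin m, 0 < (j : ℕ) →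
        (∃ H : Finset (PolVars n b), H ⊆ F j ∧ H.card + 1 = (F j).card ∧
          ∃ i : Fin m, i < j ∧ H ⊆ F i) ∧
        (∀ G : Finset (PolVars n b), G ⊆ F j → (∃ i : Fin m, i < j ∧ G ⊆ F i) →
          ∃ H : Finset (PolVars n b), G ⊆ H ∧ H ⊆ F j ∧ H.card + 1 = (F j).card ∧
            ∃ i : Fin m, i < j ∧ H ⊆ F i)) := by
  classical
  set r : (∀ i, Fin (b i)) → (∀ i, Fin (b i)) → Prop := fun s t => keyT s ≤ keyT t with hr
  haveI hTrans : IsTrans _ r := ⟨fun a b c hab hbc => le_trans hab hbc⟩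
  haveI hAnti : IsAntisymm _ r := ⟨fun a b hab hba => keyT_inj (le_antisymm hab hba)⟩
  haveI hTotal : IsTotal _ r := ⟨fun a b => le_total _ _⟩
  haveI hDec : DecidableRel r := fun a b => Nat.decLe _ _
  set A : Finset (∀ i, Fin (b i)) :=
    Finset.univ.filter (fun s => monomial (toF s) (1:K) ∉ I) with hA
  set l := A.sort r with hl
  have hmeml : ∀ s, s ∈ l ↔ monomial (toF s) (1:K) ∉ I := by
    intro s
    rw [hl, Finset.mem_sort, hA, Finset.mem_filter]
    simp
  have hnodup := A.sort_nodup r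
  have hsorted := A.pairwise_sort r
  rw [← hl] at hnodup hsorted
  have hgetinj : Function.Injective l.get := List.nodup_iff_injective_get.1 hnodup
  have hGood : ∀ j : Fin l.length, monomial (toF (l.get j)) (1:K) ∉ I :=
    fun j => (hmeml _).1 (l.get_mem j)
  refine ⟨l.length, fun j => facetF b (l.get j), ?_, ?_, ?_, ?_, ?_⟩
  · exact fun j => facetF_isFacet hI (hGood j)
  · exact fun j j' h => hgetinj (facetF_injective h)
  · intro G hG
    obtain ⟨s, hsG, hsub⟩ := face_subset_facet hI hG.1
    have hGe : G = facetF b s := hG.2 _ (facetF_face hsG) hsub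
    obtain ⟨j, hj⟩ := List.mem_iff_get.1 ((hmeml s).2 hsG)
    refine ⟨j, ?_⟩
    show facetF b (l.get j) = G
    rw [hj, ← hGe]
  · intro j j'
    show (facetF b (l.get j)).card = (facetF b (l.get j')).card
    have h1 := facetF_card (l.get j)
    have h2 := facetF_card (l.get j')
    omega
  · intro j hj
    have main : ∀ G : Finset (PolVars n b), G ⊆ facetF b (l.get j) →
        (∃ i, i < j ∧ G ⊆ facetF b (l.get i)) →
        ∃ H, G ⊆ H ∧ H ⊆ facetF b (l.get j) ∧
          H.card + 1 = (facetF b (l.get j)).card ∧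
          ∃ i', i' < j ∧ H ⊆ facetF b (l.get i') := by
      rintro G hGj ⟨i, hij, hGi⟩
      set s := l.get j with hs
      set t := l.get i with ht
      have hts : t ≠ s := fun h => absurd (hgetinj h) (Fin.ne_of_lt hij)
      have hrts : r t s := List.Pairwise.rel_get_of_lt hsorted hij
      have hdeg : degT t ≤ degT s := degT_le_of_keyT_le hrts
      obtain ⟨i₀, hi₀⟩ := exists_coord_lt hts hdeg
      set t' := Function.update s i₀ (t i₀) with ht'
      have ht'le : toF t' ≤ toF s := by
        intro k
        simp only [toF_apply]
        by_cases hk : k = i₀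
        · subst hk
          rw [ht', Function.update_self]
          exact le_of_lt hi₀
        · rw [ht', Function.update_of_ne hk]
      have hdeg' : degT t' < degT s := by
        refine Finset.sum_lt_sum (fun k _ => by simpa using ht'le k) ⟨i₀, Finset.mem_univ i₀, ?_⟩
        rw [ht', Function.update_self]
        exact hi₀
      have hGood' : monomial (toF t') (1:K) ∉ I := not_mem_of_le ht'le (hGood j)
      obtain ⟨i', hi'⟩ := List.mem_iff_get.1 ((hmeml t').2 hGood')
      have hi'j : i' < j := by
        rcases lt_trichotomy i' j with h | h | h
        · exact h
        · exfalso
          have ht's : t' = s := by rw [← hi', h]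
          rw [ht's] at hdeg'
          exact lt_irrefl _ hdeg'
        · exfalso
          have h1 : r s t' := by
            have := List.Pairwise.rel_get_of_lt hsorted h
            rwa [← hs, hi'] at this
          exact absurd h1 (not_le_of_gt (keyT_lt hdeg'))
      set v₀ : PolVars n b := ⟨i₀, t i₀⟩ with hv₀def
      have hv₀ : v₀ ∈ facetF b s := mem_facetF.2 (Nat.ne_of_lt hi₀)
      refine ⟨(facetF b s).erase v₀, ?_, Finset.erase_subset _ _,
        Finset.card_erase_add_one hv₀, ⟨i', hi'j, ?_⟩⟩
      · intro v hv
        rw [Finset.mem_erase]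
        refine ⟨?_, hGj hv⟩
        intro hvv₀
        have hvt : v ∈ facetF b t := hGi hv
        rw [mem_facetF] at hvt
        rw [hvv₀] at hvt
        exact hvt rfl
      · intro v hv
        rw [Finset.mem_erase] at hv
        obtain ⟨hvv₀, hvs⟩ := hv
        rw [mem_facetF] at hvs ⊢
        rw [hi']
        obtain ⟨a, c⟩ := v
        by_cases hk : a = i₀
        · subst hk
          rw [ht', Function.update_self]
          intro he
          exact hvv₀ (by rw [hv₀def]; exact congrArg (Sigma.mk a) (Fin.ext he))
        · rw [ht', Function.update_of_ne hk]
          exact hvs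
    refine ⟨?_, main⟩
    have h0 : (⟨0, lt_of_le_of_lt (Nat.zero_le _) j.isLt⟩ : Fin l.length) < j := hj
    obtain ⟨H, -, hH1, hH2, hH3⟩ :=
      main ∅ (Finset.empty_subset _) ⟨_, h0, Finset.empty_subset _⟩
    exact ⟨H, hH1, hH2, hH3⟩

end
end

section
/- With respect to any total order u_1 < u_2 < ⋯ < u_m on G(L(I)) extending the componentwise partial order, the decomposition function b of L(I) is regular. Explicitly: for u = x_{1,a_1+1}⋯x_{n,a_n+1} ∈ G(L(I)), one has set(u) = {x_{1,1},…,x_{1,a_1}, x_{2,1},…,x_{2,a_2}, …, x_{n,1},…,x_{n,a_n}}; and for every x_{i,j} ∈ set(u), b(x_{i,j}·u) = x_{i,j}·(u / x_{i,a_i+1}) and set(b(x_{i,j}·u)) = set(u) ∖ {x_{i,j+1},…,x_{i,a_i}} ⊆ set(u). -/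
open MvPolynomial

noncomputable section

section Aux
variable {K : Type} [Field K] {n : ℕ} {b : Fin n → ℕ}

/-- exponent vector of `genL` -/
def EA (b : Fin n → ℕ) (a : Fin n →₀ ℕ) : PolVars n b →₀ ℕ :=
  ∑ v ∈ Finset.univ.filter (fun v : PolVars n b => (v.2 : ℕ) = a v.1), Finsupp.single v 1

lemma sigma_eq_iff {x y : PolVars n b} : x = y ↔ x.1 = y.1 ∧ (x.2 : ℕ) = (y.2 : ℕ) := by
  constructor
  · rintro rfl; exact ⟨rfl, rfl⟩
  · obtain ⟨i, j⟩ := x; obtain ⟨i', j'⟩ := y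
    rintro ⟨h1, h2⟩
    dsimp at h1 h2
    subst h1
    exact congrArg _ (Fin.ext h2)

lemma EA_apply (a : Fin n →₀ ℕ) (x : PolVars n b) :
    EA b a x = if (x.2 : ℕ) = a x.1 then 1 else 0 := by
  classical
  rw [EA, Finset.sum_apply']
  simp only [Finsupp.single_apply, Finset.sum_ite_eq, Finset.mem_filter, Finset.mem_univ,
    true_and]
  split_ifs with h <;> simp [h]

lemma prod_X_eq_monomial (F : Finset (PolVars n b)) :
    (∏ v ∈ F, (X v : MvPolynomial (PolVars n b) K))
      = monomial (∑ v ∈ F, Finsupp.single v 1) 1 := by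
  classical
  induction F using Finset.induction_on with
  | empty => simp [monomial_zero']
  | insert _ _ h ih =>
      rw [Finset.prod_insert h, Finset.sum_insert h, ih, X, monomial_mul, one_mul]

lemma genL_eq (a : Fin n →₀ ℕ) : genL K b a = monomial (EA b a) 1 := by
  rw [genL, prod_X_eq_monomial]; rfl

lemma X_mul_genL (v : PolVars n b) (a : Fin n →₀ ℕ) :
    (X v : MvPolynomial (PolVars n b) K) * genL K b a
      = monomial (Finsupp.single v 1 + EA b a) 1 := by
  rw [genL_eq, X, monomial_mul, one_mul]

lemma genL_dvd_iff (a a' : Fin n →₀ ℕ) (ha' : ∀ i, a' i < b i) (v : PolVars n b) :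
    genL K b a' ∣ (X v : MvPolynomial (PolVars n b) K) * genL K b a ↔
      ∀ i : Fin n, a' i = a i ∨ (i = v.1 ∧ a' i = (v.2 : ℕ)) := by
  classical
  rw [genL_eq, X_mul_genL, monomial_dvd_monomial]
  simp only [one_ne_zero, false_or, dvd_refl, and_true]
  constructor
  · intro hle i
    have hx := hle ⟨i, ⟨a' i, ha' i⟩⟩
    simp only [Finsupp.add_apply, EA_apply, Finsupp.single_apply, Fin.val_mk] at hx
    rw [if_pos trivial] at hx
    by_cases h1 : a' i = a i
    · exact Or.inl h1
    by_cases hne : v = ⟨i, ⟨a' i, ha' i⟩⟩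
    · have hv := sigma_eq_iff.mp hne
      exact Or.inr ⟨hv.1.symm, hv.2.symm⟩
    · rw [if_neg h1, if_neg hne] at hx
      omega
  · intro h x
    rw [Finsupp.add_apply, EA_apply, EA_apply, Finsupp.single_apply]
    by_cases h1 : (x.2 : ℕ) = a' x.1
    · rw [if_pos h1]
      rcases h x.1 with h2 | ⟨h2, h3⟩
      · rw [if_pos (h1.trans h2)]; omega
      · have : v = x := sigma_eq_iff.mpr ⟨h2.symm, (h3.symm.trans h1.symm)⟩
        rw [if_pos this]; omega
    · rw [if_neg h1]; omega

lemma not_mem_of_le_s9 {I : Ideal (MvPolynomial (Fin n) K)} {c d : Fin n →₀ ℕ}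
    (hc : monomial c (1 : K) ∉ I) (hdc : d ≤ c) : monomial d (1 : K) ∉ I := by
  intro hd
  apply hc
  have h : monomial c (1 : K) = monomial (c - d) (1 : K) * monomial d 1 := by
    rw [monomial_mul, one_mul, tsub_add_cancel_of_le hdc]
  rw [h]
  exact Ideal.mul_mem_left _ _ hd

lemma lt_b {I : Ideal (MvPolynomial (Fin n) K)} (hI : ZeroDimData K b I)
    {a : Fin n →₀ ℕ} (ha : monomial a (1 : K) ∉ I) : ∀ i, a i < b i := by
  intro i
  by_contra h
  push_neg at h
  exact not_mem_of_le_s9 ha (Finsupp.single_le_iff.mpr h) (hI.2.2 i).2.1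

lemma setOfGen_eq {I : Ideal (MvPolynomial (Fin n) K)} (hI : ZeroDimData K b I)
    {r : (Fin n →₀ ℕ) → (Fin n →₀ ℕ) → Prop}
    (hantisymm : ∀ a a', (monomial a (1 : K)) ∉ I → (monomial a' (1 : K)) ∉ I →
      r a a' → r a' a → a = a')
    (hext : ∀ a a', (monomial a (1 : K)) ∉ I → (monomial a' (1 : K)) ∉ I →
      (∀ i, a i ≤ a' i) → r a a')
    (a : Fin n →₀ ℕ) (ha : (monomial a (1 : K)) ∉ I) :
    setOfGen K b I r a = {v : PolVars n b | (v.2 : ℕ) < a v.1} := by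
  classical
  have hab : ∀ i, a i < b i := lt_b hI ha
  ext v
  simp only [setOfGen, Set.mem_setOf_eq]
  constructor
  · rintro ⟨a', hna', hr, hne, hdvd⟩
    have hchar := (genL_dvd_iff a a' (lt_b hI hna') v).mp hdvd
    have hv1 : a' v.1 = (v.2 : ℕ) := by
      by_cases h : a' v.1 = a v.1
      · exfalso
        apply hne
        ext i
        rcases hchar i with h2 | ⟨h2, h3⟩
        · exact h2
        · subst h2; exact h
      · rcases hchar v.1 with h2 | ⟨_, h3⟩
        · exact absurd h2 h
        · exact h3
    have hoff : ∀ i, i ≠ v.1 → a' i = a i := by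
      intro i hi
      rcases hchar i with h2 | ⟨h2, _⟩
      · exact h2
      · exact absurd h2 hi
    have hv2 : a' v.1 ≠ a v.1 := by
      intro h
      apply hne
      ext i
      by_cases hi : i = v.1
      · subst hi; exact h
      · exact hoff i hi
    by_contra hlt
    push_neg at hlt
    have hle : ∀ i, a i ≤ a' i := by
      intro i
      by_cases hi : i = v.1
      · subst hi; omega
      · rw [hoff i hi]
    exact hv2 (hantisymm a a' ha hna' (hext a a' ha hna' hle) hr ▸ rfl)
  · intro hv
    refine ⟨Finsupp.update a v.1 (v.2 : ℕ), ?_, ?_, ?_, ?_⟩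
    all_goals
      have happ : ∀ i, (Finsupp.update a v.1 (v.2 : ℕ)) i
          = if i = v.1 then (v.2 : ℕ) else a i := by
        intro i; rw [Finsupp.coe_update, Function.update_apply]
    all_goals
      have hle : Finsupp.update a v.1 (v.2 : ℕ) ≤ a := by
        intro i; rw [happ i]; split_ifs with h
        · subst h; omega
        · exact le_rfl
    · exact not_mem_of_le_s9 ha hle
    · exact hext _ a (not_mem_of_le_s9 ha hle) ha hle
    · intro h
      have h2 := DFunLike.congr_fun h v.1
      rw [happ v.1, if_pos rfl] at h2
      omega
    · refine (genL_dvd_iff a _ (lt_b hI (not_mem_of_le_s9 ha hle)) v).mpr ?_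
      intro i
      rw [happ i]
      by_cases h : i = v.1
      · exact Or.inr ⟨h, by rw [if_pos h]⟩
      · exact Or.inl (by rw [if_neg h])

end Aux

/-- With respect to any total order on `G(L(I))` extending the
componentwise partial order, the decomposition function `b` of `L(I)` is regular.
Explicitly, for `u = x_{1,a_1+1}⋯x_{n,a_n+1} ∈ G(L(I))`:
`set(u) = {x_{i,j} : 1 ≤ j ≤ a_i}`; and for every `x_{i,j} ∈ set(u)`, the value
`b(x_{i,j}·u)` is the generator `x_{i,j}·(u/x_{i,a_i+1})` (i.e. the generator of `L(I)`
associated with `a` updated at `i` to `j−1`, which is the `r`-least generator dividing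
`x_{i,j}·u`), and `set(b(x_{i,j}·u)) = set(u) ∖ {x_{i,j+1},…,x_{i,a_i}} ⊆ set(u)`. -/
theorem statement9 {K : Type} [Field K] {n : ℕ} (b : Fin n → ℕ)
    (I : Ideal (MvPolynomial (Fin n) K)) (hI : ZeroDimData K b I)
    (r : (Fin n →₀ ℕ) → (Fin n →₀ ℕ) → Prop)
    (hrefl : ∀ a, (monomial a (1 : K)) ∉ I → r a a)
    (hantisymm : ∀ a a', (monomial a (1 : K)) ∉ I → (monomial a' (1 : K)) ∉ I →
      r a a' → r a' a → a = a')
    (htrans : ∀ a a' a'', (monomial a (1 : K)) ∉ I → (monomial a' (1 : K)) ∉ I →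
      (monomial a'' (1 : K)) ∉ I → r a a' → r a' a'' → r a a'')
    (htotal : ∀ a a', (monomial a (1 : K)) ∉ I → (monomial a' (1 : K)) ∉ I →
      r a a' ∨ r a' a)
    (hext : ∀ a a', (monomial a (1 : K)) ∉ I → (monomial a' (1 : K)) ∉ I →
      (∀ i, a i ≤ a' i) → r a a')
    (a : Fin n →₀ ℕ) (ha : (monomial a (1 : K)) ∉ I) :
    setOfGen K b I r a = {v : PolVars n b | (v.2 : ℕ) < a v.1} ∧
    ∀ v : PolVars n b, (v.2 : ℕ) < a v.1 →
      (monomial (Finsupp.update a v.1 (v.2 : ℕ)) (1 : K)) ∉ I ∧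
      genL K b (Finsupp.update a v.1 (v.2 : ℕ)) ∣ X v * genL K b a ∧
      (∃ w : PolVars n b, w.1 = v.1 ∧ (w.2 : ℕ) = a v.1 ∧
        X v * genL K b a = X w * genL K b (Finsupp.update a v.1 (v.2 : ℕ))) ∧
      (∀ a'' : Fin n →₀ ℕ, (monomial a'' (1 : K)) ∉ I →
        genL K b a'' ∣ X v * genL K b a → r (Finsupp.update a v.1 (v.2 : ℕ)) a'') ∧
      setOfGen K b I r (Finsupp.update a v.1 (v.2 : ℕ))
        = setOfGen K b I r a \ {w : PolVars n b | w.1 = v.1 ∧ (v.2 : ℕ) ≤ (w.2 : ℕ)} ∧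
      setOfGen K b I r (Finsupp.update a v.1 (v.2 : ℕ)) ⊆ setOfGen K b I r a := by
  classical
  have hab : ∀ i, a i < b i := lt_b hI ha
  have hset := setOfGen_eq hI hantisymm hext a ha
  refine ⟨hset, ?_⟩
  intro v hv
  have happ : ∀ i, (Finsupp.update a v.1 (v.2 : ℕ)) i
      = if i = v.1 then (v.2 : ℕ) else a i := by
    intro i; rw [Finsupp.coe_update, Function.update_apply]
  have hle : Finsupp.update a v.1 (v.2 : ℕ) ≤ a := by
    intro i; rw [happ i]; split_ifs with h
    · subst h; omega
    · exact le_rfl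
  have hu'I : monomial (Finsupp.update a v.1 (v.2 : ℕ)) (1 : K) ∉ I :=
    not_mem_of_le_s9 ha hle
  have hu'b : ∀ i, (Finsupp.update a v.1 (v.2 : ℕ)) i < b i := lt_b hI hu'I
  have hdvd : genL K b (Finsupp.update a v.1 (v.2 : ℕ)) ∣ X v * genL K b a := by
    refine (genL_dvd_iff a _ hu'b v).mpr ?_
    intro i
    rw [happ i]
    by_cases h : i = v.1
    · exact Or.inr ⟨h, by rw [if_pos h]⟩
    · exact Or.inl (by rw [if_neg h])
  refine ⟨hu'I, hdvd, ?_, ?_, ?_, ?_⟩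
  · refine ⟨⟨v.1, ⟨a v.1, hab v.1⟩⟩, rfl, rfl, ?_⟩
    rw [X_mul_genL, X_mul_genL]
    refine congrArg (fun e => monomial e (1 : K)) ?_
    ext x
    rw [Finsupp.add_apply, Finsupp.add_apply, EA_apply, EA_apply,
      Finsupp.single_apply, Finsupp.single_apply, happ x.1]
    by_cases h1 : x.1 = v.1
    · have e1 : (v = x) ↔ ((v.2 : ℕ) = (x.2 : ℕ)) := by
        rw [sigma_eq_iff]; simp [h1]
      have e2 : ((⟨v.1, ⟨a v.1, hab v.1⟩⟩ : PolVars n b) = x) ↔ (a v.1 = (x.2 : ℕ)) := by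
        rw [sigma_eq_iff]; simp [h1]
      rw [if_congr e1 rfl rfl, if_congr e2 rfl rfl, if_pos h1]
      have h2 : a x.1 = a v.1 := by rw [h1]
      rw [h2]
      split_ifs <;> omega
    · have e1 : ¬ (v = x) := fun h => h1 ((sigma_eq_iff.mp h).1.symm)
      have e2 : ¬ ((⟨v.1, ⟨a v.1, hab v.1⟩⟩ : PolVars n b) = x) := fun h =>
        h1 ((sigma_eq_iff.mp h).1.symm)
      rw [if_neg e1, if_neg e2, if_neg h1]
  · intro a'' ha'' hdvd''
    have hchar := (genL_dvd_iff a a'' (lt_b hI ha'') v).mp hdvd''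
    by_cases h : a'' = a
    · subst h
      exact hext _ a'' hu'I ha'' hle
    · have heq : a'' = Finsupp.update a v.1 (v.2 : ℕ) := by
        have hv1 : a'' v.1 = (v.2 : ℕ) := by
          by_cases h2 : a'' v.1 = a v.1
          · exfalso
            apply h
            ext i
            rcases hchar i with h3 | ⟨h3, h4⟩
            · exact h3
            · subst h3; exact h2
          · rcases hchar v.1 with h3 | ⟨_, h4⟩
            · exact absurd h3 h2
            · exact h4
        ext i
        rw [happ i]
        by_cases hi : i = v.1
        · subst hi; rw [if_pos rfl]; exact hv1
        · rw [if_neg hi]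
          rcases hchar i with h3 | ⟨h3, _⟩
          · exact h3
          · exact absurd h3 hi
      rw [heq]
      exact hrefl _ hu'I
  · rw [hset, setOfGen_eq hI hantisymm hext _ hu'I]
    ext x
    simp only [Set.mem_setOf_eq, Set.mem_diff]
    rw [happ x.1]
    by_cases h : x.1 = v.1
    · rw [if_pos h]
      have hax : a x.1 = a v.1 := congrArg (fun i => a i) h
      rw [hax]
      constructor
      · intro hx
        refine ⟨by omega, ?_⟩
        rintro ⟨-, h2⟩; omega
      · rintro ⟨h1, h2⟩
        rw [not_and, not_le] at h2
        exact h2 h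
    · rw [if_neg h]
      exact ⟨fun hx => ⟨hx, fun h2 => h h2.1⟩, fun hx => hx.1⟩
  · rw [setOfGen_eq hI hantisymm hext _ hu'I, hset]
    intro x hx
    simp only [Set.mem_setOf_eq] at hx ⊢
    rw [happ x.1] at hx
    by_cases h : x.1 = v.1
    · rw [if_pos h] at hx
      have hax : a x.1 = a v.1 := congrArg (fun i => a i) h
      rw [hax]
      omega
    · rw [if_neg h] at hx; exact hx


end
end
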